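/- A finite set Q = {p₁,…,p_k} of partial orders (k ≥ 2) is a ufg set if and only if there exist attributes m₁,…,m_k ∈ M_≤ ∪ M_≰ and a partial order q such that: (1) q ∈ γ(Q), (2) for all i,j, p_i I m_j if and only if i ≠ j, and (3) for all i, ¬(q I m_i). -/

import Mathlib

/-- A partial order on `X`, viewed as a set of pairs. -/
def IsPosetRel {X : Type} (p : Set (X × X)) : Prop :=
  (∀ y : X, (y, y) ∈ p) ∧
  (∀ y₁ y₂ y₃ : X, (y₁, y₂) ∈ p → (y₂, y₃) ∈ p → (y₁, y₃) ∈ p) ∧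
  (∀ y₁ y₂ : X, (y₁, y₂) ∈ p → y₁ ≠ y₂ → (y₂, y₁) ∉ p)

/-- The set `𝒫` of all partial orders on `X`. -/
def Poset (X : Type) := {p : Set (X × X) // IsPosetRel p}

/-- The closure operator `γ(S) = {p ∈ 𝒫 | ⋂S ⊆ p ⊆ ⋃S}`. -/
def gamPO {X : Type} (S : Set (Poset X)) : Set (Poset X) :=
  {p | (⋂ s ∈ S, s.val) ⊆ p.val ∧ p.val ⊆ ⋃ s ∈ S, s.val}

/-- Condition (C1): `S ⊊ γ(S)`. -/
def C1 {X : Type} (S : Set (Poset X)) : Prop := S ⊂ gamPO S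

/-- Condition (C2): no family of proper subsets of `S` has closures unioning to `γ(S)`. -/
def C2 {X : Type} (S : Set (Poset X)) : Prop :=
  ¬ ∃ (ι : Type) (A : ι → Set (Poset X)),
      (∀ i : ι, A i ⊂ S) ∧ (⋃ i : ι, gamPO (A i)) = gamPO S

/-- A union-free generic (ufg) set. -/
def IsUfg {X : Type} (S : Set (Poset X)) : Prop := C1 S ∧ C2 S

/-- Attributes: `(true, (i,j))` is the attribute "xᵢ ≤ xⱼ", `(false, (i,j))` is "xᵢ ≰ xⱼ",
for `i ≠ j`. -/
def Attr (X : Type) := Bool × {ij : X × X // ij.1 ≠ ij.2}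

/-- The incidence relation of the formal context of partial orders. -/
def Inc {X : Type} (p : Poset X) (m : Attr X) : Prop :=
  if m.1 then m.2.val ∈ p.val else m.2.val ∉ p.val

def Phi {G M : Type} (I : G → M → Prop) (B : Set M) : Set G := {g | ∀ m ∈ B, I g m}

def Psi {G M : Type} (I : G → M → Prop) (A : Set G) : Set M := {m | ∀ g ∈ A, I g m}

def gam {G M : Type} (I : G → M → Prop) (A : Set G) : Set G := Phi I (Psi I A)

lemma gamPO_mono {X : Type} {S T : Set (Poset X)} (h : S ⊆ T) : gamPO S ⊆ gamPO T := by
  intro r hr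
  refine ⟨fun a ha => hr.1 ?_, hr.2.trans ?_⟩
  · exact Set.mem_iInter₂.2 fun s hs => Set.mem_iInter₂.1 ha s (h hs)
  · exact Set.iUnion₂_subset fun s hs => Set.subset_iUnion₂ (s := fun s _ => s.val) s (h hs)

lemma mem_gamPO_self {X : Type} {S : Set (Poset X)} {s : Poset X} (hs : s ∈ S) :
    s ∈ gamPO S := by
  refine ⟨fun a ha => Set.mem_iInter₂.1 ha s hs, ?_⟩
  exact Set.subset_iUnion₂ (s := fun s _ => s.val) s hs

theorem ufg_iff_attrs {X : Type} [Fintype X] (k : ℕ) (hk : 2 ≤ k)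
    (p : Fin k → Poset X) (hinj : Function.Injective p) :
    IsUfg (Set.range p) ↔
      ∃ (m : Fin k → Attr X) (q : Poset X),
        q ∈ gamPO (Set.range p) ∧
        (∀ i j : Fin k, Inc (p i) (m j) ↔ i ≠ j) ∧
        (∀ i : Fin k, ¬ Inc q (m i)) := by
  have hcard : 1 < Fintype.card (Fin k) := by rw [Fintype.card_fin]; omega
  constructor
  · rintro ⟨-, hC2⟩
    set Q := Set.range p with hQ
    have hA : ∀ j : Fin k, (Q \ {p j}) ⊂ Q := fun j =>
      ⟨Set.diff_subset, fun hsub => (hsub ⟨j, rfl⟩ : p j ∈ Q \ {p j}).2 rfl⟩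
    have hsub : (⋃ j : Fin k, gamPO (Q \ {p j})) ⊆ gamPO Q :=
      Set.iUnion_subset fun j => gamPO_mono (hA j).1
    obtain ⟨q, hqγ, hq⟩ : ∃ q, q ∈ gamPO Q ∧ q ∉ ⋃ j : Fin k, gamPO (Q \ {p j}) := by
      by_contra h
      push_neg at h
      exact hC2 ⟨Fin k, _, hA, hsub.antisymm h⟩
    have key : ∀ j : Fin k, ∃ m : Attr X, (∀ i, Inc (p i) m ↔ i ≠ j) ∧ ¬ Inc q m := by
      intro j
      have hqj : q ∉ gamPO (Q \ {p j}) := fun h => hq (Set.mem_iUnion.2 ⟨j, h⟩)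
      rw [gamPO, Set.mem_setOf_eq, not_and_or] at hqj
      rcases hqj with h1 | h2
      · -- some e in all p i, i ≠ j, but not in q
        rw [Set.not_subset] at h1
        obtain ⟨e, he1, he2⟩ := h1
        have hmem : ∀ i : Fin k, i ≠ j → e ∈ (p i).val := fun i hij =>
          Set.mem_iInter₂.1 he1 (p i) ⟨⟨i, rfl⟩, fun h => hij (hinj h)⟩
        have hej : e ∉ (p j).val := by
          intro hej
          exact he2 (hqγ.1 (Set.mem_iInter₂.2 (by
            rintro s ⟨i, rfl⟩
            by_cases hij : i = j
            · subst hij; exact hej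
            · exact hmem i hij)))
        have hne : e.1 ≠ e.2 := by
          intro h
          apply he2
          have := q.2.1 e.1
          rwa [show (e.1, e.1) = e from Prod.ext rfl h] at this
        refine ⟨(true, ⟨e, hne⟩), fun i => ?_, ?_⟩
        · simp only [Inc, if_true]
          constructor
          · intro h hij; subst hij; exact hej h
          · exact hmem i
        · simp only [Inc, if_true]; exact he2
      · -- some e in q but in no p i, i ≠ j
        rw [Set.not_subset] at h2
        obtain ⟨e, he1, he2⟩ := h2
        have hnot : ∀ i : Fin k, i ≠ j → e ∉ (p i).val := fun i hij h =>
          he2 (Set.mem_iUnion₂.2 ⟨p i, ⟨⟨i, rfl⟩, fun hh => hij (hinj hh)⟩, h⟩)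
        have hej : e ∈ (p j).val := by
          obtain ⟨s, hs, hes⟩ := Set.mem_iUnion₂.1 (hqγ.2 he1)
          obtain ⟨i, rfl⟩ := hs
          by_cases hij : i = j
          · subst hij; exact hes
          · exact absurd hes (hnot i hij)
        have hne : e.1 ≠ e.2 := by
          intro h
          obtain ⟨i, hij⟩ := Fintype.exists_ne_of_one_lt_card hcard j
          apply hnot i hij
          have := (p i).2.1 e.1
          rwa [show (e.1, e.1) = e from Prod.ext rfl h] at this
        refine ⟨(false, ⟨e, hne⟩), fun i => ?_, ?_⟩
        · simp only [Inc, if_neg Bool.false_ne_true]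
          constructor
          · intro h hij; subst hij; exact h hej
          · exact hnot i
        · simp only [Inc, if_neg Bool.false_ne_true]
          exact fun h => h he1
    choose m hm1 hm2 using key
    exact ⟨m, q, hqγ, fun i j => hm1 j i, hm2⟩
  · rintro ⟨m, q, hqγ, hIm, hIq⟩
    have hqnot : q ∉ Set.range p := by
      rintro ⟨i, rfl⟩
      obtain ⟨j, hji⟩ := Fintype.exists_ne_of_one_lt_card hcard i
      exact hIq j ((hIm i j).2 (Ne.symm hji))
    constructor
    · exact ⟨fun r ⟨i, hi⟩ => hi ▸ mem_gamPO_self ⟨i, rfl⟩, fun h => hqnot (h hqγ)⟩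
    · rintro ⟨ι, A, hA, hU⟩
      have hqU : q ∈ ⋃ i : ι, gamPO (A i) := hU.symm ▸ hqγ
      obtain ⟨i, hqi⟩ := Set.mem_iUnion.1 hqU
      obtain ⟨r, hrQ, hrA⟩ := Set.exists_of_ssubset (hA i)
      obtain ⟨j, rfl⟩ := hrQ
      have hall : ∀ s ∈ A i, Inc s (m j) := by
        intro s hs
        obtain ⟨l, rfl⟩ := (hA i).1 hs
        exact (hIm l j).2 fun h => hrA (h ▸ hs)
      have hq' : ¬ Inc q (m j) := hIq j
      cases hb : (m j).1
      · -- attribute "e ∉ ·"; q contains e, but q ⊆ ⋃ A i and no s ∈ A i contains e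
        simp only [Inc, hb, if_false] at hq' hall
        have hqe : (m j).2.val ∈ q.val := not_not.1 hq'
        obtain ⟨s, hs, hes⟩ := Set.mem_iUnion₂.1 (hqi.2 hqe)
        exact hall s hs hes
      · -- attribute "e ∈ ·"; every s ∈ A i contains e, so e ∈ q, but q lacks e
        simp only [Inc, hb, if_true] at hq' hall
        exact hq' (hqi.1 (Set.mem_iInter₂.2 hall))
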